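/- For any $\phi \in \mathbb{R}$ and integer $b \ge 1$ with $\kappa = a - b/2$, the logistic kernel admits the representation $\frac{(e^\phi)^a}{(1+e^\phi)^b} = 2^{-b} e^{\kappa\phi} \mathbb{E}\big[e^{-\tau\phi^2/2}\big]$ where $\tau \sim \mathrm{PG}(b,0)$; in the special case $b=1$, $a \in \{0,1\}$, this reads $\frac{e^{a\phi}}{1+e^\phi} = \tfrac12 e^{(a-1/2)\phi}\,\mathbb{E}[e^{-\tau\phi^2/2}]$, using that the Laplace transform of $\tau \sim \mathrm{PG}(1,0)$ is $\mathbb{E}[e^{-\tau t}] = \cosh^{-1}(\sqrt{t/2}) = 1/\cosh(\sqrt{t/2})$. -/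

import Mathlib

open MeasureTheory

/-- Pólya-Gamma representation of the logistic kernel: if `τ ~ PG(b,0)`, i.e.
`E[exp(-τ t)] = cosh(√(t/2))⁻ᵇ`, then
`(e^φ)^a / (1+e^φ)^b = 2⁻ᵇ e^{κφ} E[exp(-τ φ²/2)]` with `κ = a - b/2`. -/
theorem stmt_10 (b : ℕ) (hb : 1 ≤ b) (a : ℝ)
    (μ : Measure ℝ) [IsProbabilityMeasure μ]
    (hLaplace : ∀ t : ℝ, 0 ≤ t →
      (∫ τ, Real.exp (-τ * t) ∂μ) = (Real.cosh (Real.sqrt (t / 2)))⁻¹ ^ b)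
    (φ : ℝ) :
    (Real.exp φ) ^ a / (1 + Real.exp φ) ^ b
      = 2⁻¹ ^ b * Real.exp ((a - (b : ℝ) / 2) * φ) *
          ∫ τ, Real.exp (-τ * φ ^ 2 / 2) ∂μ := by
  have hint : (∫ τ, Real.exp (-τ * φ ^ 2 / 2) ∂μ)
      = (Real.cosh (φ / 2))⁻¹ ^ b := by
    have h := hLaplace (φ ^ 2 / 2) (by positivity)
    have hs : Real.sqrt (φ ^ 2 / 2 / 2) = |φ| / 2 := by
      rw [show φ ^ 2 / 2 / 2 = (φ / 2) ^ 2 by ring, Real.sqrt_sq_eq_abs, abs_div]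
      simp
    rw [hs] at h
    have heq : ∀ τ : ℝ, -τ * φ ^ 2 / 2 = -τ * (φ ^ 2 / 2) := by intro τ; ring
    simp_rw [heq]
    rw [h]
    rcases abs_cases φ with ⟨h1, _⟩ | ⟨h1, _⟩
    · rw [h1]
    · rw [h1, neg_div, Real.cosh_neg]
  rw [hint]
  have h1 : (1 : ℝ) + Real.exp φ = 2 * Real.exp (φ / 2) * Real.cosh (φ / 2) := by
    rw [Real.cosh_eq]
    have e1 : Real.exp (φ / 2) * Real.exp (φ / 2) = Real.exp φ := by
      rw [← Real.exp_add, Real.exp_eq_exp]; ring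
    have e2 : Real.exp (φ / 2) * Real.exp (-(φ / 2)) = 1 := by
      rw [← Real.exp_add]; simp
    nlinarith [e1, e2]
  have hc : Real.cosh (φ / 2) ≠ 0 := ne_of_gt (Real.cosh_pos (φ / 2))
  rw [h1, Real.rpow_def_of_pos (Real.exp_pos φ), Real.log_exp,
    mul_pow, mul_pow, ← Real.exp_nat_mul]
  field_simp
  have e3 : Real.exp ((a * 2 - (b : ℝ)) * φ / 2) * Real.exp ((b : ℝ) * φ / 2)
      = Real.exp (φ * a) := by
    rw [← Real.exp_add, Real.exp_eq_exp]; ring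
  rw [← e3]
  have hc' : Real.cosh (φ / 2) ^ b * (Real.cosh (φ / 2))⁻¹ ^ b = 1 := by
    rw [← mul_pow, mul_inv_cancel₀ hc, one_pow]
  have h2 : (2 : ℝ)⁻¹ ^ b * 2 ^ b = 1 := by rw [← mul_pow]; norm_num
  linear_combination (norm := ring_nf) (-(Real.exp ((a * 2 - (b : ℝ)) * φ / 2) * Real.exp ((b : ℝ) * φ / 2)) * (2 : ℝ)⁻¹ ^ b * 2 ^ b) * hc' - (Real.exp ((a * 2 - (b : ℝ)) * φ / 2) * Real.exp ((b : ℝ) * φ / 2)) * h2
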